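/- Let p be a prime, n a positive integer, and A, B subsets of G = ℤ_p × ℤ_{p^n}. Then (A,B) is a spectral pair if and only if (B,A) is a spectral pair. -/

import Mathlib

open Complex Pointwise

/-- The inner product on `ℤ_p × ℤ_{p^n}`: `⟨u,v⟩ = p^(n-1)·u₁·v₁ + u₂·v₂` in `ℤ_{p^n}`. -/
def inn (p n : ℕ) (u v : ZMod p × ZMod (p ^ n)) : ZMod (p ^ n) :=
  (p : ZMod (p ^ n)) ^ (n - 1) * (u.1.val : ZMod (p ^ n)) * (v.1.val : ZMod (p ^ n)) +
    u.2 * v.2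

/-- The character `χ_g(h) = e^(2πi⟨g,h⟩/p^n)`. -/
noncomputable def chi (p n : ℕ) (g h : ZMod p × ZMod (p ^ n)) : ℂ :=
  Complex.exp (2 * Real.pi * Complex.I * ((inn p n g h).val : ℂ) / ((p : ℂ) ^ n))

/-- `χ_g(A) = Σ_{a ∈ A} χ_g(a)`. -/
noncomputable def chiSum (p n : ℕ) (g : ZMod p × ZMod (p ^ n))
    (A : Finset (ZMod p × ZMod (p ^ n))) : ℂ :=
  ∑ a ∈ A, chi p n g a

/-- The zero set `Z_A = {g : χ_g(A) = 0}`. -/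
def zeroSet (p n : ℕ) (A : Finset (ZMod p × ZMod (p ^ n))) :
    Set (ZMod p × ZMod (p ^ n)) :=
  {g | chiSum p n g A = 0}

/-- `(A,B)` is a spectral pair: `|A| = |B|` and `χ_{b-b'}(A) = 0` for distinct `b,b' ∈ B`. -/
def SpectralPair (p n : ℕ) (A B : Finset (ZMod p × ZMod (p ^ n))) : Prop :=
  A.card = B.card ∧ ∀ b ∈ B, ∀ b' ∈ B, b ≠ b' → chiSum p n (b - b') A = 0

/-- `A` is a spectral set: some `B` makes `(A,B)` a spectral pair. -/
def SpectralSet (p n : ℕ) (A : Finset (ZMod p × ZMod (p ^ n))) : Prop :=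
  ∃ B : Finset (ZMod p × ZMod (p ^ n)), SpectralPair p n A B

/-- `(A,T)` is a tiling pair: every `g` has a unique representation `g = a + t`, `a ∈ A`, `t ∈ T`. -/
def TilingPair (p n : ℕ) (A T : Finset (ZMod p × ZMod (p ^ n))) : Prop :=
  ∀ g : ZMod p × ZMod (p ^ n),
    ∃! x : (ZMod p × ZMod (p ^ n)) × (ZMod p × ZMod (p ^ n)),
      x.1 ∈ A ∧ x.2 ∈ T ∧ g = x.1 + x.2

/-- `A` tiles `ℤ_p × ℤ_{p^n}` by translation. -/
def Tiles (p n : ℕ) (A : Finset (ZMod p × ZMod (p ^ n))) : Prop :=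
  ∃ T : Finset (ZMod p × ZMod (p ^ n)), TilingPair p n A T

/-- `(A,B)` is a spectral pair iff `(B,A)` is a spectral pair. -/
lemma inn_comm (p n : ℕ) (u v : ZMod p × ZMod (p ^ n)) : inn p n u v = inn p n v u := by
  unfold inn; ring

lemma chi_comm (p n : ℕ) (g h : ZMod p × ZMod (p ^ n)) : chi p n g h = chi p n h g := by
  unfold chi; rw [inn_comm]

lemma pow_mul_val_add (p n : ℕ) (hp : p.Prime) (hn : 1 ≤ n) (x y : ZMod p) :
    (p : ZMod (p ^ n)) ^ (n - 1) * (((x + y).val : ℕ) : ZMod (p ^ n)) =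
    (p : ZMod (p ^ n)) ^ (n - 1) * ((x.val : ZMod (p ^ n)) + (y.val : ZMod (p ^ n))) := by
  haveI : NeZero p := ⟨hp.ne_zero⟩
  have hval : (x + y).val = (x.val + y.val) % p := ZMod.val_add x y
  have hdm : p * ((x.val + y.val) / p) + (x.val + y.val) % p = x.val + y.val :=
    Nat.div_add_mod _ p
  have hpn : ((p : ZMod (p ^ n)) ^ (n - 1)) * (p : ZMod (p ^ n)) = 0 := by
    rw [← pow_succ]
    have : n - 1 + 1 = n := Nat.succ_pred_eq_of_pos hn
    rw [this, ← Nat.cast_pow, ZMod.natCast_self]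
  have h1 : ((x.val : ZMod (p ^ n)) + y.val) =
      (p : ZMod (p ^ n)) * ((x.val + y.val) / p : ℕ) + (((x + y).val : ℕ) : ZMod (p ^ n)) := by
    rw [hval]
    have := congrArg (fun m : ℕ => (m : ZMod (p ^ n))) hdm
    push_cast at this ⊢
    linear_combination -this
  linear_combination (-(p : ZMod (p^n))^(n-1)) * h1 -
    (((x.val + y.val) / p : ℕ) : ZMod (p^n)) * hpn

lemma inn_add_left (p n : ℕ) (hp : p.Prime) (hn : 1 ≤ n) (g g' h : ZMod p × ZMod (p ^ n)) :
    inn p n (g + g') h = inn p n g h + inn p n g' h := by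
  unfold inn
  simp only [Prod.fst_add, Prod.snd_add]
  linear_combination (h.1.val : ZMod (p^n)) * pow_mul_val_add p n hp hn g.1 g'.1

lemma chi_ne_zero (p n : ℕ) (g h : ZMod p × ZMod (p ^ n)) : chi p n g h ≠ 0 := by
  rw [chi]; exact Complex.exp_ne_zero _

lemma chi_add_left (p n : ℕ) (hp : p.Prime) (hn : 1 ≤ n) (g g' h : ZMod p × ZMod (p ^ n)) :
    chi p n (g + g') h = chi p n g h * chi p n g' h := by
  haveI : NeZero (p ^ n) := ⟨pow_ne_zero n hp.ne_zero⟩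
  have hpc : ((p : ℂ)) ^ n ≠ 0 := pow_ne_zero n (Nat.cast_ne_zero.mpr hp.ne_zero)
  unfold chi
  rw [inn_add_left p n hp hn, ← Complex.exp_add]
  set x := inn p n g h
  set y := inn p n g' h
  have hv : (x + y).val = (x.val + y.val) % (p ^ n) := ZMod.val_add x y
  set q : ℕ := (x.val + y.val) / (p ^ n) with hq
  have hdm : p ^ n * q + (x.val + y.val) % (p ^ n) = x.val + y.val := Nat.div_add_mod _ _
  have hc : (((x + y).val : ℕ) : ℂ) = (x.val : ℂ) + (y.val : ℂ) - (p : ℂ) ^ n * q := by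
    rw [hv]
    have := congrArg (fun m : ℕ => (m : ℂ)) hdm
    push_cast at this
    linear_combination this
  have hsplit : 2 * (Real.pi : ℂ) * Complex.I * (((x + y).val : ℕ) : ℂ) / ((p : ℂ) ^ n) =
      (2 * (Real.pi : ℂ) * Complex.I * ((x.val : ℕ) : ℂ) / ((p : ℂ) ^ n) +
       2 * (Real.pi : ℂ) * Complex.I * ((y.val : ℕ) : ℂ) / ((p : ℂ) ^ n)) - q * (2 * Real.pi * Complex.I) := by
    rw [hc]; field_simp
  rw [hsplit, Complex.exp_sub]
  have h1 : Complex.exp ((q : ℂ) * (2 * Real.pi * Complex.I)) = 1 := by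
    have := Complex.exp_int_mul_two_pi_mul_I (q : ℤ)
    push_cast at this
    exact this
  rw [h1, div_one]

lemma chi_zero_left (p n : ℕ) (hp : p.Prime) (h : ZMod p × ZMod (p ^ n)) :
    chi p n 0 h = 1 := by
  haveI : NeZero p := ⟨hp.ne_zero⟩
  haveI : NeZero (p ^ n) := ⟨pow_ne_zero n hp.ne_zero⟩
  have h0 : inn p n 0 h = 0 := by simp [inn]
  rw [chi, h0]
  simp

lemma chi_conj (p n : ℕ) (g h : ZMod p × ZMod (p ^ n)) :
    (starRingEnd ℂ) (chi p n g h) = (chi p n g h)⁻¹ := by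
  rw [chi, ← Complex.exp_conj, ← Complex.exp_neg]
  congr 1
  simp only [map_div₀, map_mul, map_pow, Complex.conj_I, Complex.conj_ofReal, map_natCast,
    map_ofNat]
  ring

lemma chi_mul_conj (p n : ℕ) (hp : p.Prime) (hn : 1 ≤ n) (g g' h : ZMod p × ZMod (p ^ n)) :
    chi p n g h * (starRingEnd ℂ) (chi p n g' h) = chi p n (g - g') h := by
  rw [chi_conj]
  have h1 := chi_add_left p n hp hn (g - g') g' h
  rw [sub_add_cancel] at h1
  rw [h1, mul_inv_cancel_right₀ (chi_ne_zero p n g' h)]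

lemma chi_mul_star (p n : ℕ) (hp : p.Prime) (hn : 1 ≤ n) (g g' h : ZMod p × ZMod (p ^ n)) :
    chi p n g h * star (chi p n g' h) = chi p n (g - g') h := by
  rw [← starRingEnd_apply]; exact chi_mul_conj p n hp hn g g' h


lemma spectral_swap (p n : ℕ) (hp : p.Prime) (hn : 1 ≤ n)
    (A B : Finset (ZMod p × ZMod (p ^ n)))
    (hcard : A.card = B.card)
    (horth : ∀ b ∈ B, ∀ b' ∈ B, b ≠ b' → chiSum p n (b - b') A = 0) :
    ∀ a ∈ A, ∀ a' ∈ A, a ≠ a' → chiSum p n (a - a') B = 0 := by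
  intro a ha a' ha' hne
  have hk0 : ((A.card : ℂ)) ≠ 0 := by
    exact_mod_cast Nat.cast_ne_zero.mpr (Finset.card_ne_zero_of_mem ha)
  have hcc : Fintype.card ↥A = Fintype.card ↥B := by
    simpa [Fintype.card_coe] using hcard
  let e : ↥A ≃ ↥B := Fintype.equivOfCardEq hcc
  let M : Matrix ↥A ↥A ℂ := fun i j => chi p n ((e i : ZMod p × ZMod (p ^ n))) (j :)
  have h1 : M * M.conjTranspose = (A.card : ℂ) • 1 := by
    ext i i'
    rw [Matrix.mul_apply]
    simp only [Matrix.conjTranspose_apply]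
    simp only [M]
    simp only [chi_mul_star p n hp hn]
    by_cases hii : i = i'
    · subst hii
      simp only [sub_self, chi_zero_left p n hp]
      simp [Finset.card_univ, Fintype.card_coe, Matrix.one_apply_eq]
    · have hee : ((e i : ZMod p × ZMod (p ^ n))) ≠ (e i' :) := by
        intro hcoe
        exact hii (e.injective (Subtype.coe_injective hcoe))
      have hsum : ∑ j : ↥A, chi p n ((e i :) - (e i' :)) (j :) =
          chiSum p n ((e i :) - (e i' :)) A := Finset.sum_coe_sort A _
      rw [hsum, horth _ (e i).2 _ (e i').2 hee]
      simp [Matrix.one_apply_ne hii]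
  have h2 : M.conjTranspose * M = (A.card : ℂ) • 1 := by
    have hA : M * ((A.card : ℂ)⁻¹ • M.conjTranspose) = 1 := by
      rw [Matrix.mul_smul, h1, smul_smul, inv_mul_cancel₀ hk0, one_smul]
    have hB := mul_eq_one_comm.mp hA
    rw [Matrix.smul_mul] at hB
    calc M.conjTranspose * M
        = (A.card : ℂ) • ((A.card : ℂ)⁻¹ • (M.conjTranspose * M)) := by
          rw [smul_smul, mul_inv_cancel₀ hk0, one_smul]
      _ = (A.card : ℂ) • (1 : Matrix ↥A ↥A ℂ) := by rw [hB]
  have hij : (⟨a', ha'⟩ : ↥A) ≠ ⟨a, ha⟩ := by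
    intro hh; exact hne (congrArg Subtype.val hh).symm
  have h3 : (M.conjTranspose * M) ⟨a', ha'⟩ ⟨a, ha⟩ = 0 := by
    rw [h2]
    simp [Matrix.one_apply_ne hij]
  calc chiSum p n (a - a') B
      = ∑ b : ↥B, chi p n (a - a') (b :) := (Finset.sum_coe_sort B _).symm
    _ = ∑ i : ↥A, chi p n (a - a') ((e i) :) := (Equiv.sum_comp e _).symm
    _ = ∑ i : ↥A, star (M i ⟨a', ha'⟩) * M i ⟨a, ha⟩ := by
        refine Finset.sum_congr rfl fun i _ => ?_
        show chi p n (a - a') ((e i) :) = star (chi p n (e i :) a') * chi p n (e i :) a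
        rw [mul_comm, chi_comm p n (e i :) a, chi_comm p n (e i :) a',
          chi_mul_star p n hp hn a a' (e i :)]
    _ = (M.conjTranspose * M) ⟨a', ha'⟩ ⟨a, ha⟩ := by
        rw [Matrix.mul_apply]
        exact Finset.sum_congr rfl fun i _ => by rw [Matrix.conjTranspose_apply]
    _ = 0 := h3

theorem spectralPair_comm (p n : ℕ) (hp : p.Prime) (hn : 1 ≤ n)
    (A B : Finset (ZMod p × ZMod (p ^ n))) :
    SpectralPair p n A B ↔ SpectralPair p n B A := by
  constructor <;> rintro ⟨hc, ho⟩ <;>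
    exact ⟨hc.symm, spectral_swap p n hp hn _ _ hc ho⟩
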